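/- arXiv:1907.00053 — 2 statements merged into one kernel-verified Lean document; each statement's English description precedes it below -/
import Mathlib

section
/- Given a state c of a CRN, there exists a state d reachable from c such that the set of species present in d equals the set of all possible species P(c) (the union over all states reachable from c of the species present), and moreover P(d) = P(c). -/
/-- A flux vector `u` is applicable at state `c` if every reaction with positive
flux has all of its reactants present (positive concentration) in `c`. -/
def Applicable {σ ρ : Type} (react : ρ → σ → ℕ) (u : ρ → ℝ) (c : σ → ℝ) : Prop :=
  ∀ r, 0 < u r → ∀ s, 0 < react r s → 0 < c s

/-- Net change of species `s` caused by applying flux vector `u`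
(the stoichiometry matrix applied to `u`). -/
noncomputable def StoichAct {σ ρ : Type} [Fintype ρ] (react prod : ρ → σ → ℕ)
    (u : ρ → ℝ) (s : σ) : ℝ :=
  ∑ r, u r * ((prod r s : ℝ) - (react r s : ℝ))

/-- State `d` is straight-line reachable from `c` via flux vector `u`. -/
def SLReach {σ ρ : Type} [Fintype ρ] (react prod : ρ → σ → ℕ)
    (u : ρ → ℝ) (c d : σ → ℝ) : Prop :=
  (∀ r, 0 ≤ u r) ∧ Applicable react u c ∧ (∀ s, 0 ≤ d s) ∧
    ∀ s, d s = c s + StoichAct react prod u s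

/-- Flux vector `u` consumes species `s`. -/
def Consumes {σ ρ : Type} (react : ρ → σ → ℕ) (u : ρ → ℝ) (s : σ) : Prop :=
  ∃ r, 0 < u r ∧ 0 < react r s

/-- Flux vector `u` produces species `s`. -/
def Produces {σ ρ : Type} (prod : ρ → σ → ℕ) (u : ρ → ℝ) (s : σ) : Prop :=
  ∃ r, 0 < u r ∧ 0 < prod r s

/-- `u1` is independent of `u2`: `u1` consumes no species produced or consumed by `u2`. -/
def Independent {σ ρ : Type} (react prod : ρ → σ → ℕ) (u1 u2 : ρ → ℝ) : Prop :=
  ∀ s, Consumes react u1 s → ¬ Consumes react u2 s ∧ ¬ Produces prod u2 s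

/-- Reachability: a finite sequence of straight-line segments. -/
def Reach {σ ρ : Type} [Fintype ρ] (react prod : ρ → σ → ℕ) (c d : σ → ℝ) : Prop :=
  Relation.ReflTransGen (fun x y => ∃ u, SLReach react prod u x y) c d

/-- The set of species present (with positive concentration) in state `d`. -/
def Present {σ : Type} (d : σ → ℝ) : Set σ := {s | 0 < d s}

/-- The set of possible species: species present in some state reachable from `c`. -/
def Possible {σ ρ : Type} [Fintype ρ] (react prod : ρ → σ → ℕ) (c : σ → ℝ) : Set σ :=
  ⋃ d ∈ {d | Reach react prod c d}, Present d

section Helpers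
open Classical
variable {σ ρ : Type} [Fintype ρ] {react prod : ρ → σ → ℕ}

lemma stoich_scale (u : ρ → ℝ) (α : ℝ) (s : σ) :
    StoichAct react prod (fun r => α * u r) s = α * StoichAct react prod u s := by
  simp [StoichAct, Finset.mul_sum, mul_assoc]

lemma slreach_scale {u : ρ → ℝ} {x y : σ → ℝ} {α : ℝ} (hα : 0 < α)
    (h : SLReach react prod u x y) :
    SLReach react prod (fun r => α * u r) (fun s => α * x s) (fun s => α * y s) := by
  obtain ⟨h1, h2, h3, h4⟩ := h
  refine ⟨fun r => mul_nonneg hα.le (h1 r), ?_, fun s => mul_nonneg hα.le (h3 s), ?_⟩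
  · intro r hr s hs
    have hr' : 0 < α * u r := hr
    have hur : 0 < u r := by nlinarith [h1 r]
    exact mul_pos hα (h2 r hur s hs)
  · intro s
    show α * y s = α * x s + _
    rw [stoich_scale, h4 s]; ring

lemma slreach_translate {u : ρ → ℝ} {x y c' : σ → ℝ} (hc' : ∀ s, 0 ≤ c' s)
    (h : SLReach react prod u x y) :
    SLReach react prod u (fun s => x s + c' s) (fun s => y s + c' s) := by
  obtain ⟨h1, h2, h3, h4⟩ := h
  refine ⟨h1, ?_, fun s => add_nonneg (h3 s) (hc' s), ?_⟩
  · intro r hr s hs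
    exact add_pos_of_pos_of_nonneg (h2 r hr s hs) (hc' s)
  · intro s
    show y s + c' s = (x s + c' s) + _
    rw [h4 s]; ring

lemma reach_scale {x y : σ → ℝ} {α : ℝ} (hα : 0 < α)
    (h : Reach react prod x y) :
    Reach react prod (fun s => α * x s) (fun s => α * y s) := by
  refine Relation.ReflTransGen.lift (fun (z : σ → ℝ) => fun s => α * z s) ?_ _ _ h
  rintro a b ⟨u, hu⟩
  exact ⟨fun r => α * u r, slreach_scale hα hu⟩

lemma reach_translate {x y c' : σ → ℝ} (hc' : ∀ s, 0 ≤ c' s)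
    (h : Reach react prod x y) :
    Reach react prod (fun s => x s + c' s) (fun s => y s + c' s) := by
  refine Relation.ReflTransGen.lift (fun (z : σ → ℝ) => fun s => z s + c' s) ?_ _ _ h
  rintro a b ⟨u, hu⟩
  exact ⟨u, slreach_translate hc' hu⟩

lemma reach_nonneg {x y : σ → ℝ} (hx : ∀ s, 0 ≤ x s) (h : Reach react prod x y) :
    ∀ s, 0 ≤ y s := by
  induction h with
  | refl => exact hx
  | tail _ h ih => exact h.choose_spec.2.2.1

lemma reach_midpoint {c d1 d2 : σ → ℝ} (hc : ∀ s, 0 ≤ c s)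
    (h1 : Reach react prod c d1) (h2 : Reach react prod c d2) :
    Reach react prod c (fun s => (d1 s + d2 s) / 2) := by
  have hc2 : ∀ s, (0:ℝ) ≤ c s / 2 := fun s => by linarith [hc s]
  have hd1 : ∀ s, 0 ≤ d1 s := reach_nonneg hc h1
  have hd12 : ∀ s, (0:ℝ) ≤ d1 s / 2 := fun s => by linarith [hd1 s]
  have half : (0:ℝ) < 1/2 := by norm_num
  have A : Reach react prod (fun s => (1/2) * c s) (fun s => (1/2) * d1 s) :=
    reach_scale half h1
  have B : Reach react prod (fun s => (1/2) * c s) (fun s => (1/2) * d2 s) :=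
    reach_scale half h2
  have A' : Reach react prod (fun s => (1/2) * c s + c s / 2)
      (fun s => (1/2) * d1 s + c s / 2) := reach_translate hc2 A
  have B' : Reach react prod (fun s => (1/2) * c s + d1 s / 2)
      (fun s => (1/2) * d2 s + d1 s / 2) := reach_translate hd12 B
  have e1 : (fun s => (1/2) * c s + c s / 2) = c := by funext s; ring
  have e2 : (fun s => (1/2) * d1 s + c s / 2) = (fun s => (1/2) * c s + d1 s / 2) := by
    funext s; ring
  have e3 : (fun s => (1/2) * d2 s + d1 s / 2) = (fun s => (d1 s + d2 s) / 2) := by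
    funext s; ring
  rw [e1, e2] at A'
  rw [e3] at B'
  exact A'.trans B'

lemma mem_possible_iff {c : σ → ℝ} {s : σ} :
    s ∈ Possible react prod c ↔ ∃ d, Reach react prod c d ∧ 0 < d s := by
  simp [Possible, Present]

end Helpers

/-- There is a state `d` reachable from `c` whose present species are exactly the
possible species of `c`, and moreover `Possible d = Possible c`. -/
theorem exists_all_possible {σ ρ : Type} [Fintype σ] [Fintype ρ]
    (react prod : ρ → σ → ℕ) (c : σ → ℝ) (hc : ∀ s, 0 ≤ c s) :
    ∃ d : σ → ℝ, Reach react prod c d ∧ Present d = Possible react prod c ∧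
      Possible react prod d = Possible react prod c := by
  classical
  have key : ∀ F : Finset σ, (↑F ⊆ Possible react prod c) →
      ∃ d, Reach react prod c d ∧ ∀ s ∈ F, 0 < d s := by
    intro F
    induction F using Finset.induction_on with
    | empty => intro _; exact ⟨c, Relation.ReflTransGen.refl, by simp⟩
    | insert a F ha ih =>
      intro hsub
      rw [Finset.coe_insert, Set.insert_subset_iff] at hsub
      obtain ⟨d, hd, hdF⟩ := ih hsub.2
      obtain ⟨da, hda, hdaa⟩ := mem_possible_iff.mp hsub.1
      refine ⟨fun s => (d s + da s) / 2, reach_midpoint hc hd hda, ?_⟩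
      intro s hs
      have hdn := reach_nonneg hc hd
      have hdan := reach_nonneg hc hda
      rcases Finset.mem_insert.mp hs with h | h
      · subst h
        have h1 := hdn s
        show 0 < (d s + da s) / 2
        linarith
      · have h1 := hdF s h
        have h2 := hdan s
        show 0 < (d s + da s) / 2
        linarith
  obtain ⟨d, hd, hdpos⟩ := key (Set.toFinite (Possible react prod c)).toFinset
    (by rw [Set.Finite.coe_toFinset])
  have hdpos' : ∀ s ∈ Possible react prod c, 0 < d s := fun s hs =>
    hdpos s ((Set.Finite.mem_toFinset _).mpr hs)
  refine ⟨d, hd, ?_, ?_⟩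
  · ext s
    constructor
    · intro hs; exact mem_possible_iff.mpr ⟨d, hd, hs⟩
    · intro hs; exact hdpos' s hs
  · ext s
    simp only [mem_possible_iff]
    constructor
    · rintro ⟨e, he, hse⟩; exact ⟨e, hd.trans he, hse⟩
    · intro hs
      exact ⟨d, Relation.ReflTransGen.refl,
        hdpos' s (mem_possible_iff.mpr hs)⟩
end

section
/- If a CRC stably computes a function f : R_{\geq 0}^n \to R_{\geq 0} and is output-oblivious (its output species Y appears as a reactant in no reaction), then f is superadditive: f(x1) + f(x2) \leq f(x1 + x2) for all inputs x1, x2. -/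
open Classical in
/-- Initial state encoding input `x` on the input species `X i`, all other species 0. -/
noncomputable def InitState {σ : Type} {n : ℕ} (X : Fin n → σ) (x : Fin n → ℝ) : σ → ℝ :=
  fun s => ∑ i, if X i = s then x i else 0

/-- A state `o` is output stable if no reachable state changes the output concentration. -/
def OutputStable {σ ρ : Type} [Fintype ρ] (react prod : ρ → σ → ℕ) (Y : σ)
    (o : σ → ℝ) : Prop :=
  ∀ o', Reach react prod o o' → o' Y = o Y

/-- The CRC with input species `X`, output species `Y` stably computes `f`:
from every state reachable from an input state, an output stable state with
output concentration `f x` is reachable. -/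
def StablyComputes {σ ρ : Type} [Fintype ρ] {n : ℕ} (react prod : ρ → σ → ℕ)
    (X : Fin n → σ) (Y : σ) (f : (Fin n → ℝ) → ℝ) : Prop :=
  ∀ x : Fin n → ℝ, (∀ i, 0 ≤ x i) →
    ∀ c, Reach react prod (InitState X x) c →
      ∃ o, Reach react prod c o ∧ OutputStable react prod Y o ∧ o Y = f x

lemma slreach_add {σ ρ : Type} [Fintype ρ] (react prod : ρ → σ → ℕ)
    (u : ρ → ℝ) (c d e : σ → ℝ) (he : ∀ s, 0 ≤ e s)
    (h : SLReach react prod u c d) :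
    SLReach react prod u (fun s => c s + e s) (fun s => d s + e s) := by
  obtain ⟨h1, h2, h3, h4⟩ := h
  refine ⟨h1, ?_, ?_, ?_⟩
  · intro r hr s hs
    have := h2 r hr s hs
    have := he s
    dsimp only
    linarith
  · intro s; have := h3 s; have := he s; dsimp only; linarith
  · intro s; dsimp only; rw [h4 s]; ring

lemma reach_add {σ ρ : Type} [Fintype ρ] (react prod : ρ → σ → ℕ)
    (c d e : σ → ℝ) (he : ∀ s, 0 ≤ e s)
    (h : Reach react prod c d) :
    Reach react prod (fun s => c s + e s) (fun s => d s + e s) := by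
  induction h with
  | refl => exact Relation.ReflTransGen.refl
  | tail _ hstep ih =>
      obtain ⟨u, hu⟩ := hstep
      exact ih.tail ⟨u, slreach_add react prod u _ _ e he hu⟩

lemma reach_nonneg_s16 {σ ρ : Type} [Fintype ρ] (react prod : ρ → σ → ℕ)
    (c d : σ → ℝ) (hc : ∀ s, 0 ≤ c s) (h : Reach react prod c d) :
    ∀ s, 0 ≤ d s := by
  induction h with
  | refl => exact hc
  | tail _ hstep _ =>
      obtain ⟨u, hu⟩ := hstep
      exact hu.2.2.1

lemma reach_Y_mono {σ ρ : Type} [Fintype ρ] (react prod : ρ → σ → ℕ)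
    (Y : σ) (hob : ∀ r, react r Y = 0)
    (c d : σ → ℝ) (h : Reach react prod c d) : c Y ≤ d Y := by
  induction h with
  | refl => exact le_rfl
  | tail _ hstep ih =>
      obtain ⟨u, h1, _, _, h4⟩ := hstep
      refine le_trans ih ?_
      rw [h4 Y]
      have : 0 ≤ StoichAct react prod u Y := by
        unfold StoichAct
        apply Finset.sum_nonneg
        intro r _
        rw [hob r]
        simp only [Nat.cast_zero, sub_zero]
        exact mul_nonneg (h1 r) (Nat.cast_nonneg _)
      linarith

lemma initState_nonneg {σ : Type} {n : ℕ} (X : Fin n → σ) (x : Fin n → ℝ)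
    (hx : ∀ i, 0 ≤ x i) : ∀ s, 0 ≤ InitState X x s := by
  intro s
  apply Finset.sum_nonneg
  intro i _
  split <;> [exact hx i; exact le_rfl]

lemma initState_addf {σ : Type} {n : ℕ} (X : Fin n → σ) (x1 x2 : Fin n → ℝ) :
    InitState X (x1 + x2) = fun s => InitState X x1 s + InitState X x2 s := by
  funext s
  unfold InitState
  rw [← Finset.sum_add_distrib]
  apply Finset.sum_congr rfl
  intro i _
  by_cases h : X i = s <;> simp [h]

/-- If an output-oblivious CRC (the output species `Y` is never a reactant) stably
computes `f`, then `f` is superadditive. -/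
theorem output_oblivious_superadditive {σ ρ : Type} [Fintype ρ] {n : ℕ}
    (react prod : ρ → σ → ℕ) (X : Fin n → σ) (hX : Function.Injective X)
    (Y : σ) (hY : Y ∉ Set.range X)
    (hob : ∀ r, react r Y = 0)
    (f : (Fin n → ℝ) → ℝ)
    (hcomp : StablyComputes react prod X Y f) :
    ∀ x1 x2 : Fin n → ℝ, (∀ i, 0 ≤ x1 i) → (∀ i, 0 ≤ x2 i) →
      f x1 + f x2 ≤ f (x1 + x2) := by
  intro x1 x2 hx1 hx2
  -- compute on x1 alone
  obtain ⟨o1, ho1r, _, ho1Y⟩ := hcomp x1 hx1 _ Relation.ReflTransGen.refl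
  obtain ⟨o2, ho2r, _, ho2Y⟩ := hcomp x2 hx2 _ Relation.ReflTransGen.refl
  have hx12 : ∀ i, 0 ≤ (x1 + x2) i := fun i => add_nonneg (hx1 i) (hx2 i)
  have hinit2 : ∀ s, 0 ≤ InitState X x2 s := initState_nonneg X x2 hx2
  have ho1nn : ∀ s, 0 ≤ o1 s :=
    reach_nonneg_s16 react prod _ _ (initState_nonneg X x1 hx1) ho1r
  -- init(x1+x2) → o1 + init x2
  have step1 : Reach react prod (InitState X (x1 + x2))
      (fun s => o1 s + InitState X x2 s) := by
    rw [initState_addf]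
    exact reach_add react prod _ _ _ hinit2 ho1r
  -- o1 + init x2 → o1 + o2 (add o1 to Reach (init x2) o2, commuted)
  have step2 : Reach react prod (fun s => o1 s + InitState X x2 s)
      (fun s => o1 s + o2 s) := by
    have := reach_add react prod _ _ o1 ho1nn ho2r
    simpa [add_comm] using this
  have hreach : Reach react prod (InitState X (x1 + x2)) (fun s => o1 s + o2 s) :=
    step1.trans step2
  obtain ⟨o, hor, _, hoY⟩ := hcomp (x1 + x2) hx12 _ hreach
  have hmono := reach_Y_mono react prod Y hob _ _ hor
  rw [← hoY, ← ho1Y, ← ho2Y]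
  exact hmono
end
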